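/- arXiv:math/0504388 — 2 statements merged into one kernel-verified Lean document; each statement's English description precedes it below -/
import Mathlib

section
/- For every prime p and every integer k with p+2 ≤ k ≤ 2p−1, write (λ₋ · λ₊⁻¹)^{k−1} = Σ_{i≥0} c_i X^i in ℚ_p[[X]]. Then c_i ∈ ℤ_p for every i with 0 ≤ i ≤ p−2, and c_{p−1} − (k−1)/p ∈ ℤ_p. (This is the coefficientwise form of the paper's lemma: if v_p(a_p) = 1, α is the part of degree ≤ k−2 of a_p(λ₋/λ₊)^{k−1}, and β is the residue of (a_p/p)·(k−1), then the reduction of α modulo the maximal ideal equals β·u(X)·X^{p−1} for some u ∈ 1 + X·k_L[[X]].) -/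
open PowerSeries

/-- `qSeries p n` is the polynomial
`q_n = ((1+X)^(p^n) - 1)/((1+X)^(p^(n-1)) - 1) = Φ_p((1+X)^(p^(n-1)))`,
viewed as a power series over `ℚ_p`. -/
noncomputable def qSeries (p : ℕ) [Fact p.Prime] (n : ℕ) : PowerSeries ℚ_[p] :=
  ∑ j ∈ Finset.range p, ((1 + PowerSeries.X) ^ (p ^ (n - 1))) ^ j

/-- The product topology of coefficientwise convergence on `ℚ_p[[X]]`. -/
noncomputable def coeffTopology (p : ℕ) [Fact p.Prime] :
    TopologicalSpace (PowerSeries ℚ_[p]) :=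
  TopologicalSpace.induced (fun f n => (PowerSeries.coeff (R := ℚ_[p]) n) f) Pi.topologicalSpace

/-- `λ₊ = ∏_{n ≥ 1} q_{2n}/p` in `ℚ_p[[X]]`. -/
noncomputable def lambdaPlus (p : ℕ) [Fact p.Prime] : PowerSeries ℚ_[p] :=
  letI := coeffTopology p
  ∏' n : ℕ, ((p : ℚ_[p])⁻¹ • qSeries p (2 * (n + 1)))

/-- `λ₋ = ∏_{n ≥ 1} q_{2n-1}/p` in `ℚ_p[[X]]`. -/
noncomputable def lambdaMinus (p : ℕ) [Fact p.Prime] : PowerSeries ℚ_[p] :=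
  letI := coeffTopology p
  ∏' n : ℕ, ((p : ℚ_[p])⁻¹ • qSeries p (2 * n + 1))


open Filter

variable {p : ℕ} [Fact p.Prime]

lemma myNormNat (m : ℕ) : ‖(m : ℚ_[p])‖ ≤ 1 :=
  IsUltrametricDist.norm_natCast_le_one ℚ_[p] m

lemma myNormNatUnit {i : ℕ} (h1 : 1 ≤ i) (h2 : i < p) : ‖(i : ℚ_[p])‖ = 1 := by
  refine le_antisymm (myNormNat i) ?_
  by_contra h
  push_neg at h
  have h' : ‖((i : ℤ) : ℚ_[p])‖ < 1 := by
    rw [show ((i:ℤ) : ℚ_[p]) = (i : ℚ_[p]) by push_cast; ring]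
    exact h
  have hd : (p : ℤ) ∣ (i : ℤ) := (Padic.norm_intCast_lt_one_iff (k := (i : ℤ))).1 h'
  have hpd : p ∣ i := by exact_mod_cast hd
  have := Nat.le_of_dvd (by omega) hpd
  omega

lemma mySumNorm {ι : Type*} (s : Finset ι) (f : ι → ℚ_[p]) {C : ℝ} (hC : 0 ≤ C)
    (h : ∀ i ∈ s, ‖f i‖ ≤ C) : ‖∑ i ∈ s, f i‖ ≤ C :=
  IsUltrametricDist.norm_sum_le_of_forall_le_of_nonneg hC h

lemma coeff_one_add_X_pow (M i : ℕ) :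
    PowerSeries.coeff (R := ℚ_[p]) i ((1 + PowerSeries.X) ^ M) = (M.choose i : ℚ_[p]) := by
  have h : (((1 + Polynomial.X : Polynomial ℚ_[p]) ^ M : Polynomial ℚ_[p]) : PowerSeries ℚ_[p])
      = (1 + PowerSeries.X) ^ M := by
    rw [Polynomial.coe_pow, Polynomial.coe_add, Polynomial.coe_one, Polynomial.coe_X]
  rw [← h, Polynomial.coeff_coe, Polynomial.coeff_one_add_X_pow]


lemma coeff_qSeries (n i : ℕ) :
    PowerSeries.coeff (R := ℚ_[p]) i (qSeries p n)
      = ∑ j ∈ Finset.range p, ((p ^ (n - 1) * j).choose i : ℚ_[p]) := by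
  rw [qSeries, map_sum]
  refine Finset.sum_congr rfl fun j _ => ?_
  rw [← pow_mul, coeff_one_add_X_pow]

lemma coeff_zero_qSeries (n : ℕ) : PowerSeries.coeff (R := ℚ_[p]) 0 (qSeries p n) = (p : ℚ_[p]) := by
  rw [coeff_qSeries]
  simp

lemma norm_coeff_qSeries_le_one (n i : ℕ) : ‖PowerSeries.coeff (R := ℚ_[p]) i (qSeries p n)‖ ≤ 1 := by
  rw [coeff_qSeries]
  exact mySumNorm _ _ zero_le_one fun j _ => myNormNat _

lemma norm_coeff_qSeries {n i : ℕ} (hn : 1 ≤ n) (hi : 1 ≤ i) :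
    ‖PowerSeries.coeff (R := ℚ_[p]) i (qSeries p n)‖ ≤ (p : ℝ) ^ (1 - (n : ℤ)) * ‖(i : ℚ_[p])‖⁻¹ := by
  have hp1 : 1 < p := (Fact.out : p.Prime).one_lt
  have hrhs : (0:ℝ) ≤ (p : ℝ) ^ (1 - (n : ℤ)) * ‖(i : ℚ_[p])‖⁻¹ := by positivity
  rw [coeff_qSeries]
  refine mySumNorm _ _ hrhs fun j _ => ?_
  set N := p ^ (n - 1) * j with hNdef
  by_cases hN : N = 0
  · rw [hN, Nat.choose_eq_zero_of_lt (by omega)]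
    simpa using hrhs
  · obtain ⟨N', hN'⟩ := Nat.exists_eq_succ_of_ne_zero hN
    obtain ⟨i', hi'⟩ := Nat.exists_eq_succ_of_ne_zero (by omega : i ≠ 0)
    have hnat := Nat.add_one_mul_choose_eq N' i'
    have hkey : (N.choose i : ℚ_[p]) * (i : ℚ_[p])
        = (N : ℚ_[p]) * ((N'.choose i' : ℕ) : ℚ_[p]) := by
      rw [hN', hi']
      have : (N' + 1).choose (i' + 1) * (i' + 1) = (N' + 1) * N'.choose i' := by
        simpa [Nat.succ_eq_add_one, mul_comm] using hnat.symm
      exact_mod_cast this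
    have hi0 : (i : ℚ_[p]) ≠ 0 := Nat.cast_ne_zero.2 (by omega)
    have hCval : (N.choose i : ℚ_[p])
        = (N : ℚ_[p]) * ((N'.choose i' : ℕ) : ℚ_[p]) * (i : ℚ_[p])⁻¹ := by
      field_simp
      exact hkey
    rw [hCval, norm_mul, norm_mul, norm_inv]
    have hNnorm : ‖(N : ℚ_[p])‖ ≤ (p : ℝ) ^ (1 - (n : ℤ)) := by
      have hsplit : (N : ℚ_[p]) = (p : ℚ_[p]) ^ (n - 1) * (j : ℚ_[p]) := by
        rw [hNdef]; push_cast; ring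
      rw [hsplit, norm_mul, Padic.norm_p_pow]
      have h2 : (-(↑(n-1) : ℤ)) = 1 - (n : ℤ) := by
        have : ((n - 1 : ℕ) : ℤ) = (n : ℤ) - 1 := by omega
        omega
      rw [h2]
      have hj1 : ‖(j : ℚ_[p])‖ ≤ 1 := myNormNat j
      have hpz : (0:ℝ) < (p:ℝ) ^ (1 - (n:ℤ)) := by positivity
      nlinarith [norm_nonneg ((j : ℚ_[p]))]
    refine mul_le_mul ?_ le_rfl (by positivity) (by positivity)
    calc ‖(N : ℚ_[p])‖ * ‖((N'.choose i' : ℕ) : ℚ_[p])‖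
        ≤ ((p : ℝ) ^ (1 - (n : ℤ))) * 1 :=
          mul_le_mul hNnorm (myNormNat _) (norm_nonneg _) (by positivity)
      _ = (p : ℝ) ^ (1 - (n : ℤ)) := mul_one _

-- coefficient 0 of products
lemma coeff_zero_prod (S : Finset ℕ) (g : ℕ → PowerSeries ℚ_[p])
    (h : ∀ n ∈ S, PowerSeries.coeff (R := ℚ_[p]) 0 (g n) = 1) :
    PowerSeries.coeff (R := ℚ_[p]) 0 (∏ n ∈ S, g n) = 1 := by
  simp only [PowerSeries.coeff_zero_eq_constantCoeff_apply] at *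
  rw [map_prod]
  exact Finset.prod_eq_one h

-- PM : plain product coefficient bound
lemma coeff_mul_norm_le (A B : PowerSeries ℚ_[p]) (m : ℕ) {CA CB : ℝ}
    (hCA : 0 ≤ CA) (hCB : 0 ≤ CB)
    (hA : ∀ a ≤ m, ‖PowerSeries.coeff (R := ℚ_[p]) a A‖ ≤ CA)
    (hB : ∀ b ≤ m, ‖PowerSeries.coeff (R := ℚ_[p]) b B‖ ≤ CB) :
    ‖PowerSeries.coeff (R := ℚ_[p]) m (A * B)‖ ≤ CA * CB := by
  rw [PowerSeries.coeff_mul]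
  refine mySumNorm _ _ (mul_nonneg hCA hCB) fun x hx => ?_
  rw [Finset.HasAntidiagonal.mem_antidiagonal] at hx
  rw [norm_mul]
  exact mul_le_mul (hA _ (by omega)) (hB _ (by omega)) (norm_nonneg _) hCA

-- PP : perturbation lemma
lemma coeff_mul_sub_norm_le (A B : PowerSeries ℚ_[p]) (m : ℕ) {C ε : ℝ}
    (hC : 0 ≤ C) (hε : 0 ≤ ε)
    (hA : ∀ a < m, ‖PowerSeries.coeff (R := ℚ_[p]) a A‖ ≤ C)
    (hB0 : PowerSeries.coeff (R := ℚ_[p]) 0 B = 1)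
    (hB : ∀ b, 1 ≤ b → b ≤ m → ‖PowerSeries.coeff (R := ℚ_[p]) b B‖ ≤ ε) :
    ‖PowerSeries.coeff (R := ℚ_[p]) m (A * B) - PowerSeries.coeff (R := ℚ_[p]) m A‖ ≤ C * ε := by
  rw [PowerSeries.coeff_mul]
  have hmem : ((m, 0) : ℕ × ℕ) ∈ Finset.HasAntidiagonal.antidiagonal m := by
    rw [Finset.HasAntidiagonal.mem_antidiagonal]; simp
  rw [← Finset.add_sum_erase _ _ hmem, hB0, mul_one, add_sub_cancel_left]
  refine mySumNorm _ _ (mul_nonneg hC hε) fun x hx => ?_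
  rw [Finset.mem_erase, Finset.HasAntidiagonal.mem_antidiagonal] at hx
  obtain ⟨hne, hsum⟩ := hx
  have hx2 : 1 ≤ x.2 := by
    rcases Nat.eq_zero_or_pos x.2 with h | h
    · exfalso; apply hne
      have : x.1 = m := by omega
      exact Prod.ext this h
    · exact h
  rw [norm_mul]
  exact mul_le_mul (hA _ (by omega)) (hB _ hx2 (by omega)) (norm_nonneg _) hC

-- KEY2 : double-extraction lemma
lemma coeff_mul_sub_two (A B : PowerSeries ℚ_[p]) {m : ℕ} (hm : 1 ≤ m) (u v : ℚ_[p])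
    (hA0 : PowerSeries.coeff (R := ℚ_[p]) 0 A = 1)
    (hAmid : ∀ a, 1 ≤ a → a < m → ‖PowerSeries.coeff (R := ℚ_[p]) a A‖ ≤ 1)
    (hAm : ‖PowerSeries.coeff (R := ℚ_[p]) m A - u‖ ≤ 1)
    (hB0 : PowerSeries.coeff (R := ℚ_[p]) 0 B = 1)
    (hBmid : ∀ b, 1 ≤ b → b < m → ‖PowerSeries.coeff (R := ℚ_[p]) b B‖ ≤ 1)
    (hBm : ‖PowerSeries.coeff (R := ℚ_[p]) m B - v‖ ≤ 1) :
    ‖PowerSeries.coeff (R := ℚ_[p]) m (A * B) - (u + v)‖ ≤ 1 := by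
  rw [PowerSeries.coeff_mul]
  have hmem1 : ((m, 0) : ℕ × ℕ) ∈ Finset.HasAntidiagonal.antidiagonal m := by
    rw [Finset.HasAntidiagonal.mem_antidiagonal]; simp
  have hmem2 : ((0, m) : ℕ × ℕ) ∈ (Finset.HasAntidiagonal.antidiagonal m).erase (m, 0) := by
    rw [Finset.mem_erase, Finset.HasAntidiagonal.mem_antidiagonal]
    constructor
    · intro h
      have := congrArg Prod.fst h
      simp at this
      omega
    · simp
  rw [← Finset.add_sum_erase _ _ hmem1, ← Finset.add_sum_erase _ _ hmem2, hB0, hA0,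
    mul_one, one_mul]
  have hrw : PowerSeries.coeff (R := ℚ_[p]) m A + (PowerSeries.coeff (R := ℚ_[p]) m B +
      ∑ x ∈ ((Finset.HasAntidiagonal.antidiagonal m).erase (m, 0)).erase (0, m),
        PowerSeries.coeff (R := ℚ_[p]) x.1 A * PowerSeries.coeff (R := ℚ_[p]) x.2 B) - (u + v)
      = (PowerSeries.coeff (R := ℚ_[p]) m A - u) + ((PowerSeries.coeff (R := ℚ_[p]) m B - v) +
      ∑ x ∈ ((Finset.HasAntidiagonal.antidiagonal m).erase (m, 0)).erase (0, m),
        PowerSeries.coeff (R := ℚ_[p]) x.1 A * PowerSeries.coeff (R := ℚ_[p]) x.2 B) := by ring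
  rw [hrw]
  have hrest : ‖∑ x ∈ ((Finset.HasAntidiagonal.antidiagonal m).erase (m, 0)).erase (0, m),
      PowerSeries.coeff (R := ℚ_[p]) x.1 A * PowerSeries.coeff (R := ℚ_[p]) x.2 B‖ ≤ 1 := by
    refine mySumNorm _ _ zero_le_one fun x hx => ?_
    rw [Finset.mem_erase, Finset.mem_erase, Finset.HasAntidiagonal.mem_antidiagonal] at hx
    obtain ⟨hne2, hne1, hsum⟩ := hx
    have hx1 : 1 ≤ x.1 ∧ x.1 < m := by
      constructor
      · rcases Nat.eq_zero_or_pos x.1 with h | h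
        · exact absurd (Prod.ext h (by omega)) hne2
        · exact h
      · rcases Nat.lt_or_ge x.1 m with h | h
        · exact h
        · exact absurd (Prod.ext (by omega) (by omega)) hne1
    have hx2 : 1 ≤ x.2 ∧ x.2 < m := by omega
    rw [norm_mul]
    calc ‖PowerSeries.coeff (R := ℚ_[p]) x.1 A‖ * ‖PowerSeries.coeff (R := ℚ_[p]) x.2 B‖
        ≤ 1 * 1 := mul_le_mul (hAmid _ hx1.1 hx1.2) (hBmid _ hx2.1 hx2.2)
          (norm_nonneg _) zero_le_one
      _ = 1 := mul_one 1
  calc ‖(PowerSeries.coeff (R := ℚ_[p]) m A - u) + ((PowerSeries.coeff (R := ℚ_[p]) m B - v) + _)‖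
      ≤ max ‖PowerSeries.coeff (R := ℚ_[p]) m A - u‖ ‖(PowerSeries.coeff (R := ℚ_[p]) m B - v) + _‖ :=
        IsUltrametricDist.norm_add_le_max _ _
    _ ≤ 1 := by
        refine max_le hAm ?_
        exact le_trans (IsUltrametricDist.norm_add_le_max _ _) (max_le hBm hrest)

-- PB : crude bound for coefficients of partial products
lemma prod_coeff_bound (f : ℕ → PowerSeries ℚ_[p])
    (h0 : ∀ n, PowerSeries.coeff (R := ℚ_[p]) 0 (f n) = 1)
    (h1 : ∀ n i, ‖PowerSeries.coeff (R := ℚ_[p]) i (f n)‖ ≤ p) :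
    ∀ (S : Finset ℕ) (j : ℕ), ‖PowerSeries.coeff (R := ℚ_[p]) j (∏ n ∈ S, f n)‖ ≤ (p : ℝ) ^ j := by
  have hp1 : (1:ℝ) ≤ p := by
    have := (Fact.out : p.Prime).one_lt; exact_mod_cast this.le
  intro S
  induction S using Finset.cons_induction with
  | empty =>
    intro j
    rw [Finset.prod_empty, PowerSeries.coeff_one]
    split
    · rw [norm_one]; exact one_le_pow₀ hp1
    · rw [norm_zero]; positivity
  | cons a S ha ih =>
    intro j
    rw [Finset.prod_cons, PowerSeries.coeff_mul]
    refine mySumNorm _ _ (by positivity) fun x hx => ?_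
    rw [Finset.HasAntidiagonal.mem_antidiagonal] at hx
    rw [norm_mul]
    rcases Nat.eq_zero_or_pos x.1 with h | h
    · have hx2 : x.2 = j := by omega
      rw [h, h0, norm_one, one_mul, hx2]
      exact ih j
    · calc ‖PowerSeries.coeff (R := ℚ_[p]) x.1 (f a)‖ * ‖PowerSeries.coeff (R := ℚ_[p]) x.2 (∏ n ∈ S, f n)‖
          ≤ (p:ℝ) * (p:ℝ) ^ x.2 := mul_le_mul (h1 a x.1) (ih x.2) (norm_nonneg _) (by positivity)
        _ = (p:ℝ) ^ (x.2 + 1) := by ring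
        _ ≤ (p:ℝ) ^ j := pow_le_pow_right₀ hp1 (by omega)

-- PT : tail products stay small
lemma prod_coeff_tail (f : ℕ → PowerSeries ℚ_[p]) (m : ℕ) {ε : ℝ} (hε0 : 0 ≤ ε) (hε1 : ε ≤ 1) :
    ∀ (S : Finset ℕ),
    (∀ n ∈ S, PowerSeries.coeff (R := ℚ_[p]) 0 (f n) = 1) →
    (∀ n ∈ S, ∀ i, 1 ≤ i → i ≤ m → ‖PowerSeries.coeff (R := ℚ_[p]) i (f n)‖ ≤ ε) →
    (PowerSeries.coeff (R := ℚ_[p]) 0 (∏ n ∈ S, f n) = 1 ∧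
      ∀ i, 1 ≤ i → i ≤ m → ‖PowerSeries.coeff (R := ℚ_[p]) i (∏ n ∈ S, f n)‖ ≤ ε) := by
  intro S
  induction S using Finset.cons_induction with
  | empty =>
    intro _ _
    refine ⟨by simp, fun i hi _ => ?_⟩
    rw [Finset.prod_empty, PowerSeries.coeff_one, if_neg (by omega)]
    simpa using hε0
  | cons a S ha ih =>
    intro hc0 hcb
    have ih' := ih (fun n hn => hc0 n (Finset.mem_cons_of_mem hn))
      (fun n hn => hcb n (Finset.mem_cons_of_mem hn))
    have ha0 : PowerSeries.coeff (R := ℚ_[p]) 0 (f a) = 1 := hc0 a (Finset.mem_cons_self a S)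
    have hab : ∀ i, 1 ≤ i → i ≤ m → ‖PowerSeries.coeff (R := ℚ_[p]) i (f a)‖ ≤ ε :=
      fun i h1 h2 => hcb a (Finset.mem_cons_self a S) i h1 h2
    rw [Finset.prod_cons]
    constructor
    · rw [PowerSeries.coeff_mul]
      simp [Finset.Nat.antidiagonal_zero, ha0, ih'.1]
    · intro i hi1 him
      rw [PowerSeries.coeff_mul]
      refine mySumNorm _ _ hε0 fun x hx => ?_
      rw [Finset.HasAntidiagonal.mem_antidiagonal] at hx
      rw [norm_mul]
      rcases Nat.eq_zero_or_pos x.1 with h | h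
      · have hx2 : x.2 = i := by omega
        rw [h, ha0, norm_one, one_mul, hx2]
        exact ih'.2 i hi1 him
      · have hb : ‖PowerSeries.coeff (R := ℚ_[p]) x.2 (∏ n ∈ S, f n)‖ ≤ 1 := by
          rcases Nat.eq_zero_or_pos x.2 with h2 | h2
          · rw [h2, ih'.1, norm_one]
          · exact le_trans (ih'.2 x.2 h2 (by omega)) hε1
        calc ‖PowerSeries.coeff (R := ℚ_[p]) x.1 (f a)‖ * ‖PowerSeries.coeff (R := ℚ_[p]) x.2 (∏ n ∈ S, f n)‖
            ≤ ε * 1 := mul_le_mul (hab x.1 h (by omega)) hb (norm_nonneg _) hε0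
          _ = ε := mul_one ε

lemma tendsto_coeffTopology_iff {ι : Type*} {l : Filter ι}
    {g : ι → PowerSeries ℚ_[p]} {L : PowerSeries ℚ_[p]} :
    Filter.Tendsto g l (@nhds _ (coeffTopology p) L) ↔
      ∀ m, Filter.Tendsto (fun x => PowerSeries.coeff (R := ℚ_[p]) m (g x)) l
        (nhds (PowerSeries.coeff (R := ℚ_[p]) m L)) := by
  rw [coeffTopology, nhds_induced, Filter.tendsto_comap_iff, tendsto_pi_nhds]
  exact Iff.rfl

lemma masterME (f : ℕ → PowerSeries ℚ_[p])
    (h0 : ∀ n, PowerSeries.coeff (R := ℚ_[p]) 0 (f n) = 1)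
    (h1 : ∀ n i, ‖PowerSeries.coeff (R := ℚ_[p]) i (f n)‖ ≤ p)
    (h2 : ∀ i, 1 ≤ i → ∀ ε : ℝ, 0 < ε → ∃ N, ∀ n ≥ N,
        ‖PowerSeries.coeff (R := ℚ_[p]) i (f n)‖ ≤ ε) (m : ℕ) :
    ∀ ε : ℝ, 0 < ε → ∃ N : ℕ, ∀ S : Finset ℕ, Finset.range N ⊆ S →
      ‖PowerSeries.coeff (R := ℚ_[p]) m (∏ n ∈ S, f n)
        - PowerSeries.coeff (R := ℚ_[p]) m (∏ n ∈ Finset.range N, f n)‖ ≤ ε := by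
  have hp1 : (1:ℝ) < p := by
    have := (Fact.out : p.Prime).one_lt; exact_mod_cast this
  have h2' : ∀ (M : ℕ) (ε : ℝ), 0 < ε → ∃ N, ∀ n ≥ N, ∀ i, 1 ≤ i → i ≤ M →
      ‖PowerSeries.coeff (R := ℚ_[p]) i (f n)‖ ≤ ε := by
    intro M ε hε
    induction M with
    | zero => exact ⟨0, fun n _ i hi1 hi0 => by omega⟩
    | succ M ih =>
      obtain ⟨N1, hN1⟩ := ih
      obtain ⟨N2, hN2⟩ := h2 (M + 1) (by omega) ε hε
      refine ⟨max N1 N2, fun n hn i hi1 hiM => ?_⟩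
      rcases Nat.lt_or_ge i (M + 1) with h | h
      · exact hN1 n (le_trans (le_max_left _ _) hn) i hi1 (by omega)
      · have : i = M + 1 := by omega
        rw [this]
        exact hN2 n (le_trans (le_max_right _ _) hn)
  intro ε hε
  have hpm : (0:ℝ) < (p:ℝ) ^ m := by positivity
  set ε' : ℝ := min (ε / (p:ℝ) ^ m) 1 with hε'def
  have hε'pos : 0 < ε' := lt_min (by positivity) one_pos
  have hε'le1 : ε' ≤ 1 := min_le_right _ _
  obtain ⟨N, hN⟩ := h2' m ε' hε'pos
  refine ⟨N, fun S hS => ?_⟩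
  have hsplit : (∏ n ∈ S, f n)
      = (∏ n ∈ Finset.range N, f n) * (∏ n ∈ S \ Finset.range N, f n) := by
    rw [mul_comm, Finset.prod_sdiff hS]
  have htail := prod_coeff_tail f m hε'pos.le hε'le1 (S \ Finset.range N)
    (fun n _ => h0 n)
    (fun n hn i hi1 him => by
      rw [Finset.mem_sdiff, Finset.mem_range] at hn
      exact hN n (by omega) i hi1 him)
  have hPP := coeff_mul_sub_norm_le (∏ n ∈ Finset.range N, f n)
    (∏ n ∈ S \ Finset.range N, f n) m (C := (p:ℝ)^m) (ε := ε') hpm.le hε'pos.le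
    (fun a _ => by
      calc ‖PowerSeries.coeff (R := ℚ_[p]) a (∏ n ∈ Finset.range N, f n)‖ ≤ (p:ℝ) ^ a :=
          prod_coeff_bound f h0 h1 _ a
        _ ≤ (p:ℝ) ^ m := by
          apply pow_le_pow_right₀ hp1.le
          omega)
    htail.1 htail.2
  rw [hsplit]
  calc ‖_ - _‖ ≤ (p:ℝ)^m * ε' := hPP
    _ ≤ (p:ℝ)^m * (ε / (p:ℝ)^m) := by gcongr; exact min_le_left _ _
    _ = ε := by field_simp

lemma master (f : ℕ → PowerSeries ℚ_[p])
    (h0 : ∀ n, PowerSeries.coeff (R := ℚ_[p]) 0 (f n) = 1)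
    (h1 : ∀ n i, ‖PowerSeries.coeff (R := ℚ_[p]) i (f n)‖ ≤ p)
    (h2 : ∀ i, 1 ≤ i → ∀ ε : ℝ, 0 < ε → ∃ N, ∀ n ≥ N,
        ‖PowerSeries.coeff (R := ℚ_[p]) i (f n)‖ ≤ ε) (m : ℕ) :
    Filter.Tendsto (fun S : Finset ℕ => PowerSeries.coeff (R := ℚ_[p]) m (∏ n ∈ S, f n))
      Filter.atTop (nhds (PowerSeries.coeff (R := ℚ_[p]) m
        (letI := coeffTopology p; ∏' n, f n))) := by
  have hnet : ∀ m' : ℕ, ∃ c : ℚ_[p],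
      Filter.Tendsto (fun S : Finset ℕ => PowerSeries.coeff (R := ℚ_[p]) m' (∏ n ∈ S, f n))
        Filter.atTop (nhds c) := by
    intro m'
    have ME := masterME f h0 h1 h2 m'
    set s : ℕ → ℚ_[p] := fun N => PowerSeries.coeff (R := ℚ_[p]) m' (∏ n ∈ Finset.range N, f n)
      with hsdef
    have hcauchy : CauchySeq s := by
      rw [Metric.cauchySeq_iff']
      intro ε hε
      obtain ⟨N, hN⟩ := ME (ε/2) (by positivity)
      refine ⟨N, fun n hn => ?_⟩
      have := hN (Finset.range n) (Finset.range_subset_range.2 hn)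
      rw [dist_eq_norm]
      calc ‖s n - s N‖ ≤ ε/2 := this
        _ < ε := by linarith
    obtain ⟨c, hc⟩ := cauchySeq_tendsto_of_complete hcauchy
    refine ⟨c, ?_⟩
    rw [Metric.tendsto_nhds]
    intro ε hε
    obtain ⟨N, hN⟩ := ME (ε/3) (by positivity)
    have hbase : ‖c - s N‖ ≤ ε/3 := by
      have hnorm : Filter.Tendsto (fun n => ‖s n - s N‖) Filter.atTop
          (nhds ‖c - s N‖) := ((hc.sub tendsto_const_nhds).norm)
      refine le_of_tendsto hnorm ?_
      rw [Filter.eventually_atTop]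
      exact ⟨N, fun n hn => hN (Finset.range n) (Finset.range_subset_range.2 hn)⟩
    rw [Filter.eventually_atTop]
    refine ⟨Finset.range N, fun S hS => ?_⟩
    have h1' : ‖PowerSeries.coeff (R := ℚ_[p]) m' (∏ n ∈ S, f n) - s N‖ ≤ ε/3 := hN S hS
    rw [dist_eq_norm]
    calc ‖PowerSeries.coeff (R := ℚ_[p]) m' (∏ n ∈ S, f n) - c‖
        = ‖(PowerSeries.coeff (R := ℚ_[p]) m' (∏ n ∈ S, f n) - s N) + (s N - c)‖ := by ring_nf
      _ ≤ ‖PowerSeries.coeff (R := ℚ_[p]) m' (∏ n ∈ S, f n) - s N‖ + ‖s N - c‖ := norm_add_le _ _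
      _ ≤ ε/3 + ε/3 := by
          refine add_le_add h1' ?_
          rw [norm_sub_rev]
          exact hbase
      _ < ε := by linarith
  set L : PowerSeries ℚ_[p] := PowerSeries.mk (fun m' => (hnet m').choose) with hLdef
  have hL : ∀ m' : ℕ,
      Filter.Tendsto (fun S : Finset ℕ => PowerSeries.coeff (R := ℚ_[p]) m' (∏ n ∈ S, f n))
        Filter.atTop (nhds (PowerSeries.coeff (R := ℚ_[p]) m' L)) := by
    intro m'
    rw [hLdef, PowerSeries.coeff_mk]
    exact (hnet m').choose_spec
  letI := coeffTopology p
  have hHP : HasProd f L := tendsto_coeffTopology_iff.2 hL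
  have hMult : Multipliable f := ⟨L, hHP⟩
  exact tendsto_coeffTopology_iff.1 hMult.hasProd m

lemma norm_coeff_inv_smul (g : PowerSeries ℚ_[p]) (i : ℕ) :
    ‖PowerSeries.coeff (R := ℚ_[p]) i ((p : ℚ_[p])⁻¹ • g)‖
      = (p : ℝ) * ‖PowerSeries.coeff (R := ℚ_[p]) i g‖ := by
  rw [PowerSeries.coeff_smul, smul_eq_mul, norm_mul, norm_inv, Padic.norm_p, inv_inv]

lemma coeff_zero_f (n : ℕ) :
    PowerSeries.coeff (R := ℚ_[p]) 0 ((p : ℚ_[p])⁻¹ • qSeries p n) = 1 := by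
  have hp0 : (p : ℚ_[p]) ≠ 0 := by
    exact_mod_cast Nat.cast_ne_zero.2 (Fact.out : p.Prime).ne_zero
  rw [PowerSeries.coeff_smul, coeff_zero_qSeries, smul_eq_mul, inv_mul_cancel₀ hp0]

lemma norm_coeff_f_le_p (n i : ℕ) :
    ‖PowerSeries.coeff (R := ℚ_[p]) i ((p : ℚ_[p])⁻¹ • qSeries p n)‖ ≤ p := by
  rw [norm_coeff_inv_smul]
  have hp0 : (0:ℝ) < p := by
    have := (Fact.out : p.Prime).pos; exact_mod_cast this
  have h := norm_coeff_qSeries_le_one (p := p) n i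
  nlinarith [norm_nonneg (PowerSeries.coeff (R := ℚ_[p]) i (qSeries p n))]

lemma norm_coeff_f_small {n i : ℕ} (hn : 1 ≤ n) (hi : 1 ≤ i) :
    ‖PowerSeries.coeff (R := ℚ_[p]) i ((p : ℚ_[p])⁻¹ • qSeries p n)‖
      ≤ (p : ℝ) ^ (2 - (n:ℤ)) * ‖(i : ℚ_[p])‖⁻¹ := by
  have hp0 : (0:ℝ) < p := by
    have := (Fact.out : p.Prime).pos; exact_mod_cast this
  rw [norm_coeff_inv_smul]
  have h := norm_coeff_qSeries (p := p) hn hi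
  have hrw : (p : ℝ) ^ (2 - (n:ℤ)) = p * (p : ℝ) ^ (1 - (n:ℤ)) := by
    rw [show (2 - (n:ℤ)) = 1 + (1 - (n:ℤ)) by ring, zpow_add₀ (ne_of_gt hp0), zpow_one]
  rw [hrw, mul_assoc]
  gcongr

lemma h2_gen (c : ℕ → ℕ) (hc : ∀ n, n + 1 ≤ c n) (i : ℕ) (hi : 1 ≤ i)
    (ε : ℝ) (hε : 0 < ε) :
    ∃ N, ∀ n ≥ N, ‖PowerSeries.coeff (R := ℚ_[p]) i ((p : ℚ_[p])⁻¹ • qSeries p (c n))‖ ≤ ε := by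
  have hp1 : (1:ℝ) < p := by
    have := (Fact.out : p.Prime).one_lt; exact_mod_cast this
  have hp0 : (0:ℝ) < p := by linarith
  have hinorm : (0:ℝ) < ‖(i : ℚ_[p])‖ :=
    norm_pos_iff.2 (Nat.cast_ne_zero.2 (by omega))
  obtain ⟨t, ht⟩ := exists_pow_lt_of_lt_one
    (show (0:ℝ) < ε * ‖(i : ℚ_[p])‖ / p by positivity)
    (show (p:ℝ)⁻¹ < 1 by rw [inv_lt_one_iff₀]; right; exact hp1)
  refine ⟨t, fun n hn => ?_⟩
  have step1 : ‖PowerSeries.coeff (R := ℚ_[p]) i ((p : ℚ_[p])⁻¹ • qSeries p (c n))‖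
      ≤ (p : ℝ) ^ (2 - ((c n):ℤ)) * ‖(i : ℚ_[p])‖⁻¹ :=
    norm_coeff_f_small (by have := hc n; omega) hi
  have step2 : (p : ℝ) ^ (2 - ((c n):ℤ)) ≤ (p : ℝ) ^ (1 - (n:ℤ)) := by
    apply zpow_le_zpow_right₀ hp1.le
    have := hc n; omega
  have step3 : (p : ℝ) ^ (1 - (n:ℤ)) = p * ((p:ℝ)⁻¹) ^ n := by
    rw [show (1 - (n:ℤ)) = 1 + (-(n:ℤ)) by ring, zpow_add₀ (ne_of_gt hp0), zpow_one,
      zpow_neg, ← inv_zpow, zpow_natCast]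
  have step4 : ((p:ℝ)⁻¹) ^ n ≤ ((p:ℝ)⁻¹) ^ t := by
    apply pow_le_pow_of_le_one (by positivity) _ hn
    rw [inv_le_one_iff₀]; right; exact hp1.le
  have step5 : (p : ℝ) ^ (1 - (n:ℤ)) ≤ p * (ε * ‖(i : ℚ_[p])‖ / p) := by
    rw [step3]
    have := ht.le
    nlinarith
  have step6 : (p : ℝ) ^ (1 - (n:ℤ)) ≤ ε * ‖(i : ℚ_[p])‖ := by
    calc (p : ℝ) ^ (1 - (n:ℤ)) ≤ p * (ε * ‖(i : ℚ_[p])‖ / p) := step5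
      _ = ε * ‖(i : ℚ_[p])‖ := by field_simp
  calc ‖PowerSeries.coeff (R := ℚ_[p]) i ((p : ℚ_[p])⁻¹ • qSeries p (c n))‖
      ≤ (p : ℝ) ^ (2 - ((c n):ℤ)) * ‖(i : ℚ_[p])‖⁻¹ := step1
    _ ≤ (ε * ‖(i : ℚ_[p])‖) * ‖(i : ℚ_[p])‖⁻¹ := by
        gcongr
        exact le_trans step2 step6
    _ = ε := by field_simp

lemma fine_bound {n i : ℕ} (hn : 1 ≤ n) (hi1 : 1 ≤ i) (hip : i ≤ p - 1) :
    ‖PowerSeries.coeff (R := ℚ_[p]) i ((p : ℚ_[p])⁻¹ • qSeries p n)‖ ≤ (p:ℝ) ^ (2 - (n:ℤ)) := by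
  have hp2 : 2 ≤ p := (Fact.out : p.Prime).two_le
  have h := norm_coeff_f_small (p := p) hn hi1
  rwa [myNormNatUnit hi1 (by omega), inv_one, mul_one] at h

lemma zpow_le_one_of_np {e : ℤ} (he : e ≤ 0) : (p:ℝ) ^ e ≤ 1 := by
  have hp1 : (1:ℝ) ≤ p := by
    have := (Fact.out : p.Prime).one_lt; exact_mod_cast this.le
  calc (p:ℝ) ^ e ≤ (p:ℝ) ^ (0:ℤ) := zpow_le_zpow_right₀ hp1 he
    _ = 1 := zpow_zero _

lemma zpow_le_inv_of_le {e : ℤ} (he : e ≤ -1) : (p:ℝ) ^ e ≤ (p:ℝ)⁻¹ := by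
  have hp1 : (1:ℝ) ≤ p := by
    have := (Fact.out : p.Prime).one_lt; exact_mod_cast this.le
  calc (p:ℝ) ^ e ≤ (p:ℝ) ^ (-1:ℤ) := zpow_le_zpow_right₀ hp1 he
    _ = (p:ℝ)⁻¹ := zpow_neg_one _

lemma lambdaPlus_tendsto (m : ℕ) :
    Filter.Tendsto
      (fun S : Finset ℕ => PowerSeries.coeff (R := ℚ_[p]) m
        (∏ n ∈ S, (p : ℚ_[p])⁻¹ • qSeries p (2 * (n + 1))))
      Filter.atTop (nhds (PowerSeries.coeff (R := ℚ_[p]) m (lambdaPlus p))) := by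
  have := master (fun n => (p : ℚ_[p])⁻¹ • qSeries p (2 * (n + 1)))
    (fun n => coeff_zero_f _) (fun n i => norm_coeff_f_le_p _ _)
    (fun i hi ε hε => h2_gen (fun n => 2 * (n + 1)) (fun n => by show n + 1 ≤ 2 * (n + 1); omega) i hi ε hε) m
  simpa only [lambdaPlus] using this

lemma lambdaMinus_tendsto (m : ℕ) :
    Filter.Tendsto
      (fun S : Finset ℕ => PowerSeries.coeff (R := ℚ_[p]) m
        (∏ n ∈ S, (p : ℚ_[p])⁻¹ • qSeries p (2 * n + 1)))
      Filter.atTop (nhds (PowerSeries.coeff (R := ℚ_[p]) m (lambdaMinus p))) := by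
  have := master (fun n => (p : ℚ_[p])⁻¹ • qSeries p (2 * n + 1))
    (fun n => coeff_zero_f _) (fun n i => norm_coeff_f_le_p _ _)
    (fun i hi ε hε => h2_gen (fun n => 2 * n + 1) (fun n => by show n + 1 ≤ 2 * n + 1; omega) i hi ε hε) m
  simpa only [lambdaMinus] using this

lemma lambdaPlus_coeff_zero : PowerSeries.coeff (R := ℚ_[p]) 0 (lambdaPlus p) = 1 := by
  have h := lambdaPlus_tendsto (p := p) 0
  have hconst : (fun S : Finset ℕ => PowerSeries.coeff (R := ℚ_[p]) 0
      (∏ n ∈ S, (p : ℚ_[p])⁻¹ • qSeries p (2 * (n + 1)))) = fun _ => (1 : ℚ_[p]) :=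
    funext fun S => coeff_zero_prod S _ (fun n _ => coeff_zero_f _)
  rw [hconst] at h
  exact tendsto_nhds_unique h tendsto_const_nhds

lemma lambdaMinus_coeff_zero : PowerSeries.coeff (R := ℚ_[p]) 0 (lambdaMinus p) = 1 := by
  have h := lambdaMinus_tendsto (p := p) 0
  have hconst : (fun S : Finset ℕ => PowerSeries.coeff (R := ℚ_[p]) 0
      (∏ n ∈ S, (p : ℚ_[p])⁻¹ • qSeries p (2 * n + 1))) = fun _ => (1 : ℚ_[p]) :=
    funext fun S => coeff_zero_prod S _ (fun n _ => coeff_zero_f _)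
  rw [hconst] at h
  exact tendsto_nhds_unique h tendsto_const_nhds

lemma lambdaPlus_coeff_norm : ∀ i ≤ p - 1, ‖PowerSeries.coeff (R := ℚ_[p]) i (lambdaPlus p)‖ ≤ 1 := by
  intro i hi
  refine le_of_tendsto (lambdaPlus_tendsto i).norm (Filter.Eventually.of_forall fun S => ?_)
  have htail := prod_coeff_tail (fun n => (p : ℚ_[p])⁻¹ • qSeries p (2 * (n + 1)))
    (p - 1) zero_le_one le_rfl S (fun n _ => coeff_zero_f _)
    (fun n _ i' hi'1 hi'2 => by
      calc ‖PowerSeries.coeff (R := ℚ_[p]) i' ((p : ℚ_[p])⁻¹ • qSeries p (2 * (n + 1)))‖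
          ≤ (p:ℝ) ^ (2 - ((2 * (n + 1) : ℕ):ℤ)) := fine_bound (by omega) hi'1 hi'2
        _ ≤ 1 := zpow_le_one_of_np (by omega))
  rcases Nat.eq_zero_or_pos i with h | h
  · rw [h, htail.1, norm_one]
  · exact htail.2 i h hi

lemma sum_choose_nat (M i : ℕ) : ∑ j ∈ Finset.range M, j.choose i = M.choose (i + 1) := by
  induction M with
  | zero => simp
  | succ M ih =>
    rw [Finset.sum_range_succ, ih, Nat.choose_succ_succ' M i]
    omega

lemma coeff_q1 (i : ℕ) :
    PowerSeries.coeff (R := ℚ_[p]) i (qSeries p 1) = ((p.choose (i + 1) : ℕ) : ℚ_[p]) := by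
  rw [coeff_qSeries]
  have : ∀ j ∈ Finset.range p, ((p ^ (1 - 1) * j).choose i : ℚ_[p]) = ((j.choose i : ℕ) : ℚ_[p]) := by
    intro j _
    norm_num
  rw [Finset.sum_congr rfl this, ← Nat.cast_sum, sum_choose_nat]

lemma coeff_A_small {i : ℕ} (hi : i ≤ p - 2) :
    ‖PowerSeries.coeff (R := ℚ_[p]) i ((p : ℚ_[p])⁻¹ • qSeries p 1)‖ ≤ 1 := by
  have hp2 : 2 ≤ p := (Fact.out : p.Prime).two_le
  have hp0 : (p : ℚ_[p]) ≠ 0 := Nat.cast_ne_zero.2 (by omega)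
  rcases Nat.eq_zero_or_pos i with h | h
  · rw [h, coeff_zero_f, norm_one]
  · obtain ⟨d, hd⟩ := Nat.Prime.dvd_choose_self (Fact.out : p.Prime)
      (show i + 1 ≠ 0 by omega) (show i + 1 < p by omega)
    rw [PowerSeries.coeff_smul, coeff_q1, hd, smul_eq_mul]
    have : ((p * d : ℕ) : ℚ_[p]) = (p : ℚ_[p]) * (d : ℚ_[p]) := by push_cast; ring
    rw [this, ← mul_assoc, inv_mul_cancel₀ hp0, one_mul]
    exact myNormNat d

lemma coeff_A_top : PowerSeries.coeff (R := ℚ_[p]) (p - 1) ((p : ℚ_[p])⁻¹ • qSeries p 1)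
    = (p : ℚ_[p])⁻¹ := by
  have hp2 : 2 ≤ p := (Fact.out : p.Prime).two_le
  rw [PowerSeries.coeff_smul, coeff_q1, smul_eq_mul]
  rw [show p - 1 + 1 = p by omega, Nat.choose_self]
  simp

lemma lambdaMinus_partial (S : Finset ℕ) (hS : 0 ∈ S) :
    (∀ i ≤ p - 2, ‖PowerSeries.coeff (R := ℚ_[p]) i
        (∏ n ∈ S, (p : ℚ_[p])⁻¹ • qSeries p (2 * n + 1))‖ ≤ 1) ∧
    ‖PowerSeries.coeff (R := ℚ_[p]) (p - 1)
        (∏ n ∈ S, (p : ℚ_[p])⁻¹ • qSeries p (2 * n + 1)) - (p : ℚ_[p])⁻¹‖ ≤ 1 := by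
  have hp2 : 2 ≤ p := (Fact.out : p.Prime).two_le
  have hpinv01 : (0:ℝ) ≤ (p:ℝ)⁻¹ := by positivity
  have hpinv1 : ((p:ℝ))⁻¹ ≤ 1 := by
    rw [inv_le_one_iff₀]; right
    have : (2:ℝ) ≤ p := by exact_mod_cast hp2
    linarith
  set fM : ℕ → PowerSeries ℚ_[p] := fun n => (p : ℚ_[p])⁻¹ • qSeries p (2 * n + 1) with hfM
  have hsplit : (∏ n ∈ S, fM n) = fM 0 * ∏ n ∈ S.erase 0, fM n :=
    (Finset.mul_prod_erase S fM hS).symm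
  have htail := prod_coeff_tail fM (p - 1) hpinv01 hpinv1 (S.erase 0)
    (fun n _ => coeff_zero_f _)
    (fun n hn i' hi'1 hi'2 => by
      have hn0 : n ≠ 0 := (Finset.mem_erase.1 hn).1
      calc ‖PowerSeries.coeff (R := ℚ_[p]) i' (fM n)‖
          ≤ (p:ℝ) ^ (2 - ((2 * n + 1 : ℕ):ℤ)) := fine_bound (by omega) hi'1 hi'2
        _ ≤ (p:ℝ)⁻¹ := zpow_le_inv_of_le (by omega))
  have hTb : ∀ b ≤ p - 1, ‖PowerSeries.coeff (R := ℚ_[p]) b (∏ n ∈ S.erase 0, fM n)‖ ≤ 1 := by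
    intro b hb
    rcases Nat.eq_zero_or_pos b with h | h
    · rw [h, htail.1, norm_one]
    · exact le_trans (htail.2 b h hb) hpinv1
  constructor
  · intro i hi
    rw [hsplit]
    have := coeff_mul_norm_le (fM 0) (∏ n ∈ S.erase 0, fM n) i zero_le_one zero_le_one
      (fun a ha => coeff_A_small (by omega))
      (fun b hb => hTb b (by omega))
    simpa using this
  · rw [hsplit]
    have hPP := coeff_mul_sub_norm_le (fM 0) (∏ n ∈ S.erase 0, fM n) (p - 1)
      (C := 1) (ε := 1) zero_le_one zero_le_one
      (fun a ha => coeff_A_small (by omega))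
      htail.1 (fun b hb1 hb2 => hTb b hb2)
    rw [coeff_A_top] at hPP
    simpa using hPP

lemma lambdaMinus_coeff_norm : ∀ i ≤ p - 2, ‖PowerSeries.coeff (R := ℚ_[p]) i (lambdaMinus p)‖ ≤ 1 := by
  intro i hi
  refine le_of_tendsto (lambdaMinus_tendsto i).norm ?_
  filter_upwards [Filter.eventually_ge_atTop ({0} : Finset ℕ)] with S hS
  exact (lambdaMinus_partial S (Finset.singleton_subset_iff.1 hS)).1 i hi

lemma lambdaMinus_coeff_top :
    ‖PowerSeries.coeff (R := ℚ_[p]) (p - 1) (lambdaMinus p) - (p : ℚ_[p])⁻¹‖ ≤ 1 := by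
  refine le_of_tendsto ((lambdaMinus_tendsto (p := p) (p - 1)).sub tendsto_const_nhds).norm ?_
  filter_upwards [Filter.eventually_ge_atTop ({0} : Finset ℕ)] with S hS
  exact (lambdaMinus_partial S (Finset.singleton_subset_iff.1 hS)).2

lemma inv_coeff_zero : PowerSeries.coeff (R := ℚ_[p]) 0 (lambdaPlus p)⁻¹ = 1 := by
  have hc : PowerSeries.constantCoeff (R := ℚ_[p]) (lambdaPlus p) = 1 := by
    rw [← PowerSeries.coeff_zero_eq_constantCoeff_apply]
    exact lambdaPlus_coeff_zero
  rw [PowerSeries.coeff_zero_eq_constantCoeff_apply, PowerSeries.constantCoeff_inv, hc, inv_one]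

lemma inv_coeff_norm : ∀ i ≤ p - 1, ‖PowerSeries.coeff (R := ℚ_[p]) i (lambdaPlus p)⁻¹‖ ≤ 1 := by
  have hc : PowerSeries.constantCoeff (R := ℚ_[p]) (lambdaPlus p) = 1 := by
    rw [← PowerSeries.coeff_zero_eq_constantCoeff_apply]
    exact lambdaPlus_coeff_zero
  intro i
  induction i using Nat.strong_induction_on with
  | _ i ih =>
    intro hi
    rcases Nat.eq_zero_or_pos i with h | h
    · rw [h]
      rw [show PowerSeries.coeff (R := ℚ_[p]) 0 (lambdaPlus p)⁻¹ = 1 from inv_coeff_zero, norm_one]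
    · rw [PowerSeries.coeff_inv, if_neg (by omega), hc, inv_one, neg_mul, one_mul, norm_neg]
      refine mySumNorm _ _ zero_le_one fun x hx => ?_
      rw [Finset.HasAntidiagonal.mem_antidiagonal] at hx
      split
      · next hlt =>
          rw [norm_mul]
          calc ‖PowerSeries.coeff (R := ℚ_[p]) x.1 (lambdaPlus p)‖ *
              ‖PowerSeries.coeff (R := ℚ_[p]) x.2 (lambdaPlus p)⁻¹‖
              ≤ 1 * 1 := mul_le_mul (lambdaPlus_coeff_norm x.1 (by omega))
                (ih x.2 hlt (by omega)) (norm_nonneg _) zero_le_one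
            _ = 1 := mul_one 1
      · rw [norm_zero]; exact zero_le_one

lemma F_coeff_zero :
    PowerSeries.coeff (R := ℚ_[p]) 0 (lambdaMinus p * (lambdaPlus p)⁻¹) = 1 := by
  rw [PowerSeries.coeff_zero_eq_constantCoeff_apply, map_mul,
    ← PowerSeries.coeff_zero_eq_constantCoeff_apply (φ := lambdaMinus p)]
  rw [lambdaMinus_coeff_zero]
  have := inv_coeff_zero (p := p)
  rw [PowerSeries.coeff_zero_eq_constantCoeff_apply] at this
  rw [this, one_mul]

lemma F_coeff_norm :
    ∀ i ≤ p - 2, ‖PowerSeries.coeff (R := ℚ_[p]) i (lambdaMinus p * (lambdaPlus p)⁻¹)‖ ≤ 1 := by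
  intro i hi
  have hp2 : 2 ≤ p := (Fact.out : p.Prime).two_le
  have := coeff_mul_norm_le (lambdaMinus p) (lambdaPlus p)⁻¹ i zero_le_one zero_le_one
    (fun a ha => lambdaMinus_coeff_norm a (by omega))
    (fun b hb => inv_coeff_norm b (by omega))
  simpa using this

lemma F_coeff_top :
    ‖PowerSeries.coeff (R := ℚ_[p]) (p - 1) (lambdaMinus p * (lambdaPlus p)⁻¹)
      - (p : ℚ_[p])⁻¹‖ ≤ 1 := by
  have hp2 : 2 ≤ p := (Fact.out : p.Prime).two_le
  have hPP := coeff_mul_sub_norm_le (lambdaMinus p) (lambdaPlus p)⁻¹ (p - 1)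
    (C := 1) (ε := 1) zero_le_one zero_le_one
    (fun a ha => lambdaMinus_coeff_norm a (by omega))
    inv_coeff_zero (fun b hb1 hb2 => inv_coeff_norm b hb2)
  rw [one_mul] at hPP
  have hdecomp : PowerSeries.coeff (R := ℚ_[p]) (p - 1) (lambdaMinus p * (lambdaPlus p)⁻¹)
      - (p : ℚ_[p])⁻¹
      = (PowerSeries.coeff (R := ℚ_[p]) (p - 1) (lambdaMinus p * (lambdaPlus p)⁻¹)
          - PowerSeries.coeff (R := ℚ_[p]) (p - 1) (lambdaMinus p))
        + (PowerSeries.coeff (R := ℚ_[p]) (p - 1) (lambdaMinus p) - (p : ℚ_[p])⁻¹) := by ring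
  rw [hdecomp]
  exact le_trans (IsUltrametricDist.norm_add_le_max _ _)
    (max_le hPP lambdaMinus_coeff_top)

lemma F_pow (K : ℕ) :
    PowerSeries.coeff (R := ℚ_[p]) 0 ((lambdaMinus p * (lambdaPlus p)⁻¹) ^ K) = 1 ∧
    (∀ i ≤ p - 2, ‖PowerSeries.coeff (R := ℚ_[p]) i ((lambdaMinus p * (lambdaPlus p)⁻¹) ^ K)‖ ≤ 1) ∧
    ‖PowerSeries.coeff (R := ℚ_[p]) (p - 1) ((lambdaMinus p * (lambdaPlus p)⁻¹) ^ K)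
      - (K : ℚ_[p]) * (p : ℚ_[p])⁻¹‖ ≤ 1 := by
  have hp2 : 2 ≤ p := (Fact.out : p.Prime).two_le
  induction K with
  | zero =>
    refine ⟨by simp, fun i hi => ?_, ?_⟩
    · rw [pow_zero, PowerSeries.coeff_one]
      split
      · rw [norm_one]
      · rw [norm_zero]; exact zero_le_one
    · rw [pow_zero, PowerSeries.coeff_one, if_neg (by omega)]
      simp
  | succ K ih =>
    rw [pow_succ]
    refine ⟨?_, fun i hi => ?_, ?_⟩
    · rw [PowerSeries.coeff_zero_eq_constantCoeff_apply, map_mul,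
        ← PowerSeries.coeff_zero_eq_constantCoeff_apply
          (φ := (lambdaMinus p * (lambdaPlus p)⁻¹) ^ K)]
      rw [ih.1]
      have := F_coeff_zero (p := p)
      rw [PowerSeries.coeff_zero_eq_constantCoeff_apply] at this
      rw [this, one_mul]
    · have := coeff_mul_norm_le ((lambdaMinus p * (lambdaPlus p)⁻¹) ^ K)
        (lambdaMinus p * (lambdaPlus p)⁻¹) i zero_le_one zero_le_one
        (fun a ha => ih.2.1 a (by omega))
        (fun b hb => F_coeff_norm b (by omega))
      simpa using this
    · have hkey := coeff_mul_sub_two ((lambdaMinus p * (lambdaPlus p)⁻¹) ^ K)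
        (lambdaMinus p * (lambdaPlus p)⁻¹) (m := p - 1) (by omega)
        ((K : ℚ_[p]) * (p : ℚ_[p])⁻¹) ((p : ℚ_[p])⁻¹)
        ih.1 (fun a ha1 ha2 => ih.2.1 a (by omega)) ih.2.2
        F_coeff_zero (fun b hb1 hb2 => F_coeff_norm b (by omega)) F_coeff_top
      have hcast : ((K + 1 : ℕ) : ℚ_[p]) * (p : ℚ_[p])⁻¹
          = (K : ℚ_[p]) * (p : ℚ_[p])⁻¹ + (p : ℚ_[p])⁻¹ := by
        push_cast
        ring
      rw [hcast]
      exact hkey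


/-- If `p + 2 ≤ k ≤ 2p - 1` and `(λ₋ · λ₊⁻¹)^(k-1) = Σ c_i X^i`, then `c_i ∈ ℤ_p`
for `0 ≤ i ≤ p - 2`, and `c_{p-1} - (k-1)/p ∈ ℤ_p`. -/
theorem coeffs_of_lambda_ratio_pow_integral_and_leading
    (p : ℕ) [Fact p.Prime] (k : ℕ) (hk₁ : p + 2 ≤ k) (hk₂ : k ≤ 2 * p - 1) :
    (∀ i ≤ p - 2,
      ‖PowerSeries.coeff (R := ℚ_[p]) i ((lambdaMinus p * (lambdaPlus p)⁻¹) ^ (k - 1))‖ ≤ 1) ∧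
    ‖PowerSeries.coeff (R := ℚ_[p]) (p - 1) ((lambdaMinus p * (lambdaPlus p)⁻¹) ^ (k - 1)) -
        ((k : ℚ_[p]) - 1) / (p : ℚ_[p])‖ ≤ 1 := by
  have hp2 : 2 ≤ p := (Fact.out : p.Prime).two_le
  have h := F_pow (p := p) (k - 1)
  refine ⟨h.2.1, ?_⟩
  have hcast : ((k : ℚ_[p]) - 1) / (p : ℚ_[p]) = ((k - 1 : ℕ) : ℚ_[p]) * (p : ℚ_[p])⁻¹ := by
    rw [Nat.cast_sub (by omega : 1 ≤ k)]
    push_cast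
    ring
  rw [hcast]
  exact h.2.2
end

section
/- Let p be a prime and F a field of characteristic p. For every 2×2 matrix Q over F[[X]] whose constant-coefficient matrix Q(0) ∈ M₂(F) is invertible (equivalently Q ∈ GL₂(F[[X]])), there exists a matrix M ∈ M₂(F[[X]]) with M ≡ Id modulo X (hence M invertible over F[[X]]) such that Q·φ(M) = M·Q(0), i.e. M⁻¹·Q·φ(M) equals the constant matrix Q(0). -/
open PowerSeries

/-- Substitution of the power series `g` (of positive order) into `f`: the coefficient
of `X^j` in `f(g)` is `Σ_{n ≤ j} f_n · [X^j](g^n)`. -/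
noncomputable def substSeries {R : Type*} [CommRing R] (g f : PowerSeries R) :
    PowerSeries R :=
  PowerSeries.mk fun j =>
    ∑ n ∈ Finset.range (j + 1),
      PowerSeries.coeff n f * PowerSeries.coeff j (g ^ n)

/-- `φ : F[[X]] → F[[X]]` is the substitution `X ↦ X^p` (the reduction mod `p` of
`X ↦ (1+X)^p - 1`). -/
noncomputable def phiP (p : ℕ) {F : Type*} [CommRing F] (f : PowerSeries F) :
    PowerSeries F :=
  substSeries (PowerSeries.X ^ p) f

theorem coeff_phiP (p : ℕ) (hp : 0 < p) {F : Type*} [CommRing F] (f : PowerSeries F)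
    (j : ℕ) :
    PowerSeries.coeff j (phiP p f) =
      if p ∣ j then PowerSeries.coeff (j / p) f else 0 := by
  unfold phiP substSeries
  rw [PowerSeries.coeff_mk]
  simp only [← pow_mul, PowerSeries.coeff_X_pow]
  by_cases h : p ∣ j
  · rw [if_pos h]
    obtain ⟨m, rfl⟩ := h
    have hm : m ∈ Finset.range (p * m + 1) :=
      Finset.mem_range.mpr (Nat.lt_succ_of_le (Nat.le_mul_of_pos_left m hp))
    rw [Finset.sum_eq_single m]
    · rw [if_pos rfl, mul_one, Nat.mul_div_cancel_left m hp]
    · intro n _ hn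
      rw [if_neg, mul_zero]
      intro hc
      exact hn (Nat.eq_of_mul_eq_mul_left hp hc).symm
    · intro h'; exact absurd hm h'
  · rw [if_neg h]
    apply Finset.sum_eq_zero
    intro n _
    rw [if_neg, mul_zero]
    intro hc
    exact h ⟨n, hc⟩

/-- The coefficients of the trivializing matrix `M`, defined recursively. -/
noncomputable def cSeq {F : Type*} [Field F] (p : ℕ)
    (Qc : ℕ → Matrix (Fin 2) (Fin 2) F) (B : Matrix (Fin 2) (Fin 2) F) :
    ℕ → Matrix (Fin 2) (Fin 2) F
  | 0 => 1
  | (j + 1) =>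
    (∑ k ∈ Finset.range (j + 2),
      Qc k * (if p ∣ (j + 1 - k) then cSeq p Qc B (min ((j + 1 - k) / p) j) else 0)) * B
  decreasing_by exact Nat.lt_succ_of_le (Nat.min_le_right _ _)

theorem cSeq_key {F : Type*} [Field F] (p : ℕ) (hp : 2 ≤ p)
    (Qc : ℕ → Matrix (Fin 2) (Fin 2) F) (A B : Matrix (Fin 2) (Fin 2) F)
    (hQ0 : Qc 0 = A) (hBA : B * A = 1) (j : ℕ) :
    ∑ ik ∈ Finset.HasAntidiagonal.antidiagonal j,
      Qc ik.1 * (if p ∣ ik.2 then cSeq p Qc B (ik.2 / p) else 0) =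
    cSeq p Qc B j * A := by
  rw [Finset.Nat.sum_antidiagonal_eq_sum_range_succ_mk]
  cases j with
  | zero =>
    simp [cSeq, hQ0, Nat.zero_dvd]
  | succ j =>
    have hmin : ∀ k, k ∈ Finset.range (j + 2) → p ∣ (j + 1 - k) →
        min ((j + 1 - k) / p) j = (j + 1 - k) / p := by
      intro k _ _
      apply min_eq_left
      rcases Nat.eq_zero_or_pos (j + 1 - k) with h0 | h0
      · simp [h0]
      · have : (j + 1 - k) / p < j + 1 - k :=
          Nat.div_lt_self h0 (lt_of_lt_of_le one_lt_two hp)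
        omega
    conv_rhs => rw [cSeq]
    rw [mul_assoc, hBA, mul_one]
    apply Finset.sum_congr rfl
    intro k hk
    congr 1
    by_cases hd : p ∣ (j + 1 - k)
    · rw [if_pos hd, if_pos hd, hmin k hk hd]
    · rw [if_neg hd, if_neg hd]

/-- Dwork's trick mod `p`: if `Q ∈ M₂(F[[X]])` has invertible constant term `Q(0)`,
there is `M ≡ Id mod X` with `Q·φ(M) = M·Q(0)`. -/
theorem exists_trivialization (p : ℕ) (hp : p.Prime) (F : Type*) [Field F] [CharP F p]
    (Q : Matrix (Fin 2) (Fin 2) (PowerSeries F))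
    (hQ : IsUnit (Q.map (PowerSeries.constantCoeff (R := F)))) :
    ∃ M : Matrix (Fin 2) (Fin 2) (PowerSeries F),
      M.map (PowerSeries.constantCoeff (R := F)) = 1 ∧
      Q * M.map (phiP p) =
        M * (Q.map (PowerSeries.constantCoeff (R := F))).map (PowerSeries.C (R := F)) := by
  set A : Matrix (Fin 2) (Fin 2) F := Q.map (PowerSeries.constantCoeff (R := F)) with hA
  have hBA : A⁻¹ * A = 1 := Matrix.nonsing_inv_mul A (Matrix.isUnit_iff_isUnit_det A |>.mp hQ)
  set Qc : ℕ → Matrix (Fin 2) (Fin 2) F := fun n => Q.map (PowerSeries.coeff n) with hQc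
  have hQ0 : Qc 0 = A := by
    ext a b
    simp [hQc, hA, Matrix.map_apply, PowerSeries.coeff_zero_eq_constantCoeff]
  set c : ℕ → Matrix (Fin 2) (Fin 2) F := cSeq p Qc A⁻¹ with hc
  have hkey := cSeq_key p hp.two_le Qc A A⁻¹ hQ0 hBA
  refine ⟨Matrix.of fun a b => PowerSeries.mk fun j => c j a b, ?_, ?_⟩
  · ext a b
    simp only [Matrix.map_apply, Matrix.of_apply]
    rw [← PowerSeries.coeff_zero_eq_constantCoeff_apply, PowerSeries.coeff_mk]
    have : c 0 = 1 := by rw [hc, cSeq]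
    rw [this]
  · ext a b j
    rw [Matrix.mul_apply, Matrix.mul_apply]
    rw [map_sum, map_sum]
    have lhs : ∀ e, PowerSeries.coeff j
        (Q a e * (Matrix.of fun a b => PowerSeries.mk fun j => c j a b).map (phiP p) e b) =
        ∑ ik ∈ Finset.HasAntidiagonal.antidiagonal j, (PowerSeries.coeff ik.1 (Q a e)) *
          ((if p ∣ ik.2 then c (ik.2 / p) else 0) e b) := by
      intro e
      rw [PowerSeries.coeff_mul]
      apply Finset.sum_congr rfl
      intro ik _
      congr 1
      simp only [Matrix.map_apply, Matrix.of_apply]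
      rw [coeff_phiP p hp.pos]
      by_cases h : p ∣ ik.2
      · rw [if_pos h, if_pos h, PowerSeries.coeff_mk]
      · simp [h]
    have rhs : ∀ e, PowerSeries.coeff j
        ((Matrix.of fun a b => PowerSeries.mk fun j => c j a b) a e *
          (A.map (PowerSeries.C (R := F))) e b) = c j a e * A e b := by
      intro e
      simp only [Matrix.map_apply, Matrix.of_apply]
      rw [PowerSeries.coeff_mul_C, PowerSeries.coeff_mk]
    simp only [lhs, rhs]
    rw [Finset.sum_comm]
    have : ∀ ik ∈ Finset.HasAntidiagonal.antidiagonal j,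
        ∑ e, (PowerSeries.coeff ik.1 (Q a e)) *
          ((if p ∣ ik.2 then c (ik.2 / p) else 0) e b) =
        (Qc ik.1 * (if p ∣ ik.2 then cSeq p Qc A⁻¹ (ik.2 / p) else 0)) a b := by
      intro ik _
      rw [Matrix.mul_apply]
      apply Finset.sum_congr rfl
      intro e _
      rw [hc]
      rfl
    rw [Finset.sum_congr rfl this, ← Matrix.sum_apply, hkey]
    rw [Matrix.mul_apply]
end
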